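/- For the AND function on n bits and p ≤ 1/2, the distributional subcube partition complexity equals the distributional algorithmic complexity: sc(AND_n, π_p) = (1 − p^n)/(1 − p). -/

import Mathlib

open Classical

noncomputable section

/-- Flip the bits of `x` in the set `B`. -/
def flipOn {ι : Type*} [DecidableEq ι] (x : ι → Bool) (B : Finset ι) : ι → Bool :=
  fun i => if i ∈ B then !(x i) else x i

/-- Pointwise sensitivity of `f` at `x`. -/
def sensAt {ι : Type*} [Fintype ι] [DecidableEq ι] (f : (ι → Bool) → Bool)
    (x : ι → Bool) : ℕ :=
  (Finset.univ.filter fun i => f (flipOn x {i}) ≠ f x).card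

/-- Pointwise block sensitivity of `f` at `x`. -/
def bsAt {ι : Type*} [DecidableEq ι] (f : (ι → Bool) → Bool) (x : ι → Bool) : ℕ :=
  sSup {m | ∃ B : Fin m → Finset ι,
    (∀ j, f (flipOn x (B j)) ≠ f x) ∧ ∀ j k, j ≠ k → Disjoint (B j) (B k)}

/-- `W` is a witness set for `f` at `x`. -/
def IsWitness {ι : Type*} (f : (ι → Bool) → Bool) (x : ι → Bool) (W : Finset ι) : Prop :=
  ∀ y, (∀ i ∈ W, y i = x i) → f y = f x

/-- Pointwise minimum witness size of `f` at `x`. -/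
def witAt {ι : Type*} (f : (ι → Bool) → Bool) (x : ι → Bool) : ℕ :=
  sInf {k | ∃ W : Finset ι, W.card = k ∧ IsWitness f x W}

/-- Decision trees querying coordinates in `ι`. -/
inductive DTree (ι : Type*) where
  | leaf : DTree ι
  | node : ι → DTree ι → DTree ι → DTree ι

/-- The set of coordinates queried by the tree `T` on input `x`. -/
def DTree.path {ι : Type*} [DecidableEq ι] : DTree ι → (ι → Bool) → Finset ι
  | .leaf, _ => ∅
  | .node i t0 t1, x => insert i (if x i then t1.path x else t0.path x)

/-- The tree `T` determines `f`: at each leaf the queried bits witness the value of `f`. -/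
def DTree.Determines {ι : Type*} [DecidableEq ι] (T : DTree ι)
    (f : (ι → Bool) → Bool) : Prop :=
  ∀ x, IsWitness f x (T.path x)

/-- A partition of the hypercube into subcubes, encoded by the map sending each point to
the code (fixed coordinates) of its part. -/
structure SubcubePartition (ι : Type*) where
  code : (ι → Bool) → (ι → Option Bool)
  self_mem : ∀ x i b, code x i = some b → x i = b
  compat : ∀ x y, (∀ i b, code x i = some b → y i = b) → code y = code x

/-- Number of coordinates fixed by the subcube containing `x`. -/
def SubcubePartition.codim {ι : Type*} [Fintype ι] (P : SubcubePartition ι)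
    (x : ι → Bool) : ℕ :=
  (Finset.univ.filter fun i => (P.code x i).isSome).card

/-- The partition determines `f`, i.e. `f` is constant on each part. -/
def SubcubePartition.Determines {ι : Type*} (P : SubcubePartition ι)
    (f : (ι → Bool) → Bool) : Prop :=
  ∀ x y, (∀ i b, P.code x i = some b → y i = b) → f y = f x

/-- Deterministic sensitivity. -/
def detSens {ι : Type*} [Fintype ι] [DecidableEq ι] (f : (ι → Bool) → Bool) : ℕ :=
  Finset.univ.sup fun x => sensAt f x

/-- Deterministic block sensitivity. -/
def detBS {ι : Type*} [Fintype ι] [DecidableEq ι] (f : (ι → Bool) → Bool) : ℕ :=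
  Finset.univ.sup fun x => bsAt f x

/-- Deterministic witness complexity. -/
def detWit {ι : Type*} [Fintype ι] [DecidableEq ι] (f : (ι → Bool) → Bool) : ℕ :=
  Finset.univ.sup fun x => witAt f x

/-- Deterministic subcube partition complexity. -/
def detSC {ι : Type*} [Fintype ι] (f : (ι → Bool) → Bool) : ℕ :=
  sInf {k | ∃ P : SubcubePartition ι, P.Determines f ∧ ∀ x, P.codim x ≤ k}

/-- Deterministic algorithmic (decision tree) complexity. -/
def detAlg {ι : Type*} [Fintype ι] [DecidableEq ι] (f : (ι → Bool) → Bool) : ℕ :=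
  sInf {k | ∃ T : DTree ι, T.Determines f ∧ ∀ x, (T.path x).card ≤ k}

/-- Weight of the configuration `x` under the product Bernoulli(p) measure `π_p`. -/
def wt {ι : Type*} [Fintype ι] (p : ℝ) (x : ι → Bool) : ℝ :=
  ∏ i, (if x i then p else 1 - p)

/-- Expectation under `π_p`. -/
def expec {ι : Type*} [Fintype ι] [DecidableEq ι] (p : ℝ) (g : (ι → Bool) → ℝ) : ℝ :=
  ∑ x, wt p x * g x

/-- Distributional sensitivity. -/
def distSens {ι : Type*} [Fintype ι] [DecidableEq ι] (f : (ι → Bool) → Bool) (p : ℝ) : ℝ :=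
  expec p fun x => (sensAt f x : ℝ)

/-- Distributional block sensitivity. -/
def distBS {ι : Type*} [Fintype ι] [DecidableEq ι] (f : (ι → Bool) → Bool) (p : ℝ) : ℝ :=
  expec p fun x => (bsAt f x : ℝ)

/-- Distributional witness complexity. -/
def distWit {ι : Type*} [Fintype ι] [DecidableEq ι] (f : (ι → Bool) → Bool) (p : ℝ) : ℝ :=
  expec p fun x => (witAt f x : ℝ)

/-- Distributional subcube partition complexity. -/
def distSC {ι : Type*} [Fintype ι] [DecidableEq ι] (f : (ι → Bool) → Bool) (p : ℝ) : ℝ :=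
  sInf {c | ∃ P : SubcubePartition ι, P.Determines f ∧
    c = expec p fun x => (P.codim x : ℝ)}

/-- Distributional algorithmic complexity. -/
def distAlg {ι : Type*} [Fintype ι] [DecidableEq ι] (f : (ι → Bool) → Bool) (p : ℝ) : ℝ :=
  sInf {c | ∃ T : DTree ι, T.Determines f ∧
    c = expec p fun x => ((T.path x).card : ℝ)}

/-- `μ x J` is the joint probability that the bits equal `x` and the random set equals `J`;
the conditions say: the marginal of the bits is `π_p`, the random set is a.s. a witness set
for `f`, and the random set is local (conditionally on `{I = J}` and the bits on `J`, the
bits outside `J` are still i.i.d. Bernoulli(p)). -/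
def IsLocalWitnessSystem {ι : Type*} [Fintype ι] [DecidableEq ι]
    (f : (ι → Bool) → Bool) (p : ℝ) (μ : (ι → Bool) → Finset ι → ℝ) : Prop :=
  (∀ x J, 0 ≤ μ x J) ∧
  (∀ x, ∑ J, μ x J = wt p x) ∧
  (∀ x J, μ x J ≠ 0 → IsWitness f x J) ∧
  (∀ (J : Finset ι) x y, (∀ i ∈ J, x i = y i) → μ x J * wt p y = μ y J * wt p x)

/-- Distributional local witness complexity. -/
def distLocal {ι : Type*} [Fintype ι] [DecidableEq ι]
    (f : (ι → Bool) → Bool) (p : ℝ) : ℝ :=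
  sInf {c | ∃ μ : (ι → Bool) → Finset ι → ℝ, IsLocalWitnessSystem f p μ ∧
    c = ∑ x, ∑ J, μ x J * (J.card : ℝ)}

namespace AndSCAux

open Finset

variable {n : ℕ}

/-- Membership in the subcube coded by `κ`. -/
def InCube (κ : Fin n → Option Bool) (x : Fin n → Bool) : Prop :=
  ∀ i b, κ i = some b → x i = b

/-- Measure of the subcube coded by `κ`. -/
noncomputable def muF (p : ℝ) (κ : Fin n → Option Bool) : ℝ :=
  ∏ i, (κ i).elim 1 (fun b => if b then p else 1 - p)

set_option maxHeartbeats 1000000 in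
lemma sum_cube (p : ℝ) (κ : Fin n → Option Bool) :
    ∑ x : Fin n → Bool, (if InCube κ x then wt p x else 0) = muF p κ := by
  classical
  have key : ∀ x : Fin n → Bool,
      (if InCube κ x then wt p x else 0)
        = ∏ i, (if (∀ b, κ i = some b → x i = b) then (if x i then p else 1 - p) else 0) := by
    intro x
    by_cases h : InCube κ x
    · rw [if_pos h]
      simp only [wt]
      exact Finset.prod_congr rfl fun i _ => by rw [if_pos (h i)]
    · rw [if_neg h]
      have : ∃ i b, κ i = some b ∧ x i ≠ b := by
        by_contra hc
        push_neg at hc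
        exact h fun i b hb => hc i b hb
      obtain ⟨i, b, hib, hxb⟩ := this
      refine (Finset.prod_eq_zero (mem_univ i) ?_).symm
      rw [if_neg]
      intro hall
      exact hxb (hall b hib)
  have hbool : ∀ i : Fin n,
      (∑ c : Bool, (if (∀ b, κ i = some b → c = b) then (if c then p else 1 - p) else 0))
        = (κ i).elim 1 (fun b => if b then p else 1 - p) := by
    intro i
    cases hk : κ i with
    | none => simp
    | some b => cases b <;> simp
  calc ∑ x : Fin n → Bool, (if InCube κ x then wt p x else 0)
      = ∑ x : Fin n → Bool,
          ∏ i, (if (∀ b, κ i = some b → x i = b) then (if x i then p else 1 - p) else 0) :=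
        Finset.sum_congr rfl fun x _ => key x
    _ = ∏ i, ∑ c : Bool, (if (∀ b, κ i = some b → c = b) then (if c then p else 1 - p) else 0) :=
        (Fintype.prod_sum (fun (i : Fin n) (c : Bool) =>
          if (∀ b, κ i = some b → c = b) then (if c then p else 1 - p) else 0)).symm
    _ = muF p κ := Finset.prod_congr rfl fun i _ => hbool i

lemma inCube_update {κ : Fin n → Option Bool} {i₀ : Fin n} (h : κ i₀ = none)
    (x : Fin n → Bool) :
    InCube (Function.update κ i₀ (some false)) x ↔ InCube κ x ∧ x i₀ = false := by
  constructor
  · intro hc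
    refine ⟨fun i b hb => ?_, hc i₀ false (by simp)⟩
    rcases eq_or_ne i i₀ with rfl | hne
    · rw [h] at hb; cases hb
    · exact hc i b (by rwa [Function.update_of_ne hne])
  · rintro ⟨hc, hx⟩ i b hb
    rcases eq_or_ne i i₀ with rfl | hne
    · rw [Function.update_self] at hb
      cases hb; exact hx
    · rw [Function.update_of_ne hne] at hb
      exact hc i b hb

lemma muF_update (p : ℝ) {κ : Fin n → Option Bool} {i₀ : Fin n} (h : κ i₀ = none) :
    muF p (Function.update κ i₀ (some false)) = (1 - p) * muF p κ := by
  unfold muF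
  rw [← Finset.mul_prod_erase Finset.univ _ (Finset.mem_univ i₀),
      ← Finset.mul_prod_erase Finset.univ
        (fun i => (κ i).elim 1 (fun b => if b then p else 1 - p)) (Finset.mem_univ i₀)]
  have herase : ∀ j ∈ univ.erase i₀,
      ((Function.update κ i₀ (some false) j).elim 1 (fun b => if b then p else 1 - p))
        = (κ j).elim 1 (fun b => if b then p else 1 - p) := by
    intro j hj
    rw [Function.update_of_ne (Finset.mem_erase.mp hj).1]
  rw [Finset.prod_congr rfl herase, Function.update_self, h]
  simp

/-- Number of free coordinates. -/
def nfree (κ : Fin n → Option Bool) : ℕ := (univ.filter fun i => κ i = none).card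

/-- Number of free coordinates set to `false` in `x`. -/
def Zf (κ : Fin n → Option Bool) (x : Fin n → Bool) : ℕ :=
  (univ.filter fun i => κ i = none ∧ x i = false).card

lemma sum_cube_zf (p : ℝ) (κ : Fin n → Option Bool) :
    ∑ x : Fin n → Bool, (if InCube κ x then wt p x * (Zf κ x : ℝ) else 0)
      = (1 - p) * (nfree κ) * muF p κ := by
  classical
  have key : ∀ x : Fin n → Bool,
      (if InCube κ x then wt p x * (Zf κ x : ℝ) else 0)
        = ∑ i ∈ univ.filter (fun i => κ i = none),
            (if InCube (Function.update κ i (some false)) x then wt p x else 0) := by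
    intro x
    by_cases h : InCube κ x
    · rw [if_pos h]
      have hterm : ∀ i ∈ univ.filter (fun i => κ i = none),
          (if InCube (Function.update κ i (some false)) x then wt p x else 0)
            = (if x i = false then wt p x else 0) := by
        intro i hi
        have hfree : κ i = none := (mem_filter.mp hi).2
        by_cases hx : x i = false
        · rw [if_pos hx, if_pos ((inCube_update hfree x).mpr ⟨h, hx⟩)]
        · rw [if_neg hx, if_neg (fun hc => hx ((inCube_update hfree x).mp hc).2)]
      rw [Finset.sum_congr rfl hterm, ← Finset.sum_filter, Finset.sum_const,
        Finset.filter_filter]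
      rw [nsmul_eq_mul, mul_comm]
      congr 1
    · rw [if_neg h]
      refine (Finset.sum_eq_zero fun i hi => ?_).symm
      exact if_neg (fun hc => h ((inCube_update (mem_filter.mp hi).2 x).mp hc).1)
  rw [Finset.sum_congr rfl fun x _ => key x, Finset.sum_comm]
  have hinner : ∀ i ∈ univ.filter (fun i => κ i = none),
      (∑ x : Fin n → Bool, (if InCube (Function.update κ i (some false)) x then wt p x else 0))
        = (1 - p) * muF p κ := by
    intro i hi
    rw [sum_cube, muF_update p (mem_filter.mp hi).2]
  rw [Finset.sum_congr rfl hinner, Finset.sum_const, nsmul_eq_mul]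
  unfold nfree
  ring

lemma wt_nonneg {p : ℝ} (hp0 : 0 ≤ p) (hp1 : p ≤ 1) (x : Fin n → Bool) : 0 ≤ wt p x := by
  refine Finset.prod_nonneg fun i _ => ?_
  by_cases h : x i <;> simp [h] <;> linarith

/-- Number of `false` coordinates. -/
def Zc (x : Fin n → Bool) : ℕ := (univ.filter fun i => x i = false).card

/-- The dual weight function. -/
noncomputable def G (p : ℝ) (x : Fin n → Bool) : ℝ :=
  if ∀ i, x i = true then (n : ℝ) else (n : ℝ) - ((Zc x : ℝ) - 1) / (1 - p)

lemma sum_wt (p : ℝ) : ∑ x : Fin n → Bool, wt p x = 1 := by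
  have h := sum_cube (n := n) p (fun _ => none)
  simpa [InCube, muF] using h

lemma sum_wt_Z (p : ℝ) : ∑ x : Fin n → Bool, wt p x * (Zc x : ℝ) = (1 - p) * n := by
  have h := sum_cube_zf (n := n) p (fun _ => none)
  simpa [InCube, muF, Zf, Zc, nfree] using h

lemma sum_allTrue (p : ℝ) :
    ∑ x : Fin n → Bool, (if ∀ i, x i = true then wt p x else 0) = p ^ n := by
  classical
  have hcond : ∀ x : Fin n → Bool, (∀ i, x i = true) ↔ x = fun _ => true := by
    intro x
    constructor
    · intro h; funext i; exact h i
    · intro h i; rw [h]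
  rw [Finset.sum_congr rfl (fun x _ => by rw [if_congr (hcond x) rfl rfl])]
  rw [Finset.sum_ite_eq' univ (fun _ => true) (wt p), if_pos (mem_univ _)]
  simp [wt]

lemma sum_wt_G {p : ℝ} (hq : (1 : ℝ) - p ≠ 0) :
    ∑ x : Fin n → Bool, wt p x * G p x = (1 - p ^ n) / (1 - p) := by
  have hpt : ∀ x : Fin n → Bool, wt p x * G p x
      = wt p x * n + (wt p x - wt p x * (Zc x : ℝ)) / (1 - p)
        - (if ∀ i, x i = true then wt p x else 0) / (1 - p) := by
    intro x
    by_cases h : ∀ i, x i = true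
    · have hz : Zc x = 0 := by
        unfold Zc
        rw [Finset.card_eq_zero, Finset.filter_eq_empty_iff]
        intro i _
        simp [h i]
      rw [if_pos h]
      unfold G
      rw [if_pos h, hz]
      push_cast
      field_simp
      ring
    · rw [if_neg h]
      unfold G
      rw [if_neg h]
      field_simp
      ring
  rw [Finset.sum_congr rfl fun x _ => hpt x]
  rw [Finset.sum_sub_distrib, Finset.sum_add_distrib, ← Finset.sum_div, ← Finset.sum_div,
    ← Finset.sum_mul, Finset.sum_sub_distrib, sum_wt, sum_wt_Z, sum_allTrue]
  field_simp
  ring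

lemma part_le {p : ℝ} (hp0 : 0 ≤ p) (hp1 : p < 1) {f : (Fin n → Bool) → Bool}
    (hf : ∀ x, f x = true ↔ ∀ i, x i = true)
    (P : SubcubePartition (Fin n)) (hdet : P.Determines f) (x₀ : Fin n → Bool) :
    ∑ x ∈ univ.filter (fun x => P.code x = P.code x₀), wt p x * G p x
      ≤ ∑ x ∈ univ.filter (fun x => P.code x = P.code x₀), wt p x * (P.codim x : ℝ) := by
  classical
  set κ := P.code x₀ with hκ
  have hq0 : (0 : ℝ) < 1 - p := by linarith
  have hfiber : ∀ x : Fin n → Bool, P.code x = κ ↔ InCube κ x := by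
    intro x
    constructor
    · intro h i b hb
      exact P.self_mem x i b (by rw [h]; exact hb)
    · intro h
      exact P.compat x₀ x (fun i b hb => h i b hb)
  set d := (univ.filter fun i => (κ i).isSome).card with hd
  have hcodim : ∀ x : Fin n → Bool, P.code x = κ → P.codim x = d := by
    intro x h
    unfold SubcubePartition.codim
    rw [hd]
    congr 1
    ext i
    simp [h]
  have hfs : univ.filter (fun x : Fin n → Bool => P.code x = κ)
      = univ.filter (InCube κ) := by
    ext x
    simp [hfiber x]
  have hdm : d + nfree κ = n := by
    have h1 : (univ.filter fun i => ¬ (κ i).isSome) = univ.filter fun i => κ i = none := by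
      ext i
      simp [Option.isSome_iff_ne_none]
    have := Finset.card_filter_add_card_filter_not
      (s := (univ : Finset (Fin n))) (p := fun i => (κ i).isSome)
    rw [h1] at this
    simpa [nfree] using this
  have hRHS : ∑ x ∈ univ.filter (fun x => P.code x = P.code x₀), wt p x * (P.codim x : ℝ)
      = (d : ℝ) * muF p κ := by
    have : ∀ x ∈ univ.filter (fun x : Fin n → Bool => P.code x = κ),
        wt p x * (P.codim x : ℝ) = (d : ℝ) * wt p x := by
      intro x hx
      rw [hcodim x (mem_filter.mp hx).2]
      ring
    rw [Finset.sum_congr rfl this, ← Finset.mul_sum]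
    congr 1
    rw [hfs, Finset.sum_filter, sum_cube]
  rw [hRHS]
  by_cases hz : ∃ i₀, κ i₀ = some false
  · obtain ⟨i₀, hi₀⟩ := hz
    have hpoint : ∀ x ∈ univ.filter (fun x : Fin n → Bool => P.code x = κ),
        wt p x * G p x ≤ wt p x * ((n : ℝ) - (Zf κ x : ℝ) / (1 - p)) := by
      intro x hx
      have hcube : InCube κ x := (hfiber x).mp (mem_filter.mp hx).2
      have hxf : x i₀ = false := hcube i₀ false hi₀
      have hnot : ¬ ∀ i, x i = true := fun h => by simp [h i₀] at hxf
      have hcard : Zf κ x + 1 ≤ Zc x := by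
        have hsub : insert i₀ (univ.filter fun i => κ i = none ∧ x i = false)
            ⊆ univ.filter fun i => x i = false := by
          intro j hj
          rcases Finset.mem_insert.mp hj with rfl | hj'
          · simp [hxf]
          · simp [(mem_filter.mp hj').2.2]
        have hnm : i₀ ∉ (univ.filter fun i => κ i = none ∧ x i = false) := by
          simp [hi₀]
        have := Finset.card_le_card hsub
        rw [Finset.card_insert_of_notMem hnm] at this
        simpa [Zf, Zc, add_comm] using this
      have hG : G p x = (n : ℝ) - ((Zc x : ℝ) - 1) / (1 - p) := by
        unfold G
        rw [if_neg hnot]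
      rw [hG]
      apply mul_le_mul_of_nonneg_left _ (wt_nonneg hp0 (le_of_lt hp1) x)
      have hle : (Zf κ x : ℝ) ≤ (Zc x : ℝ) - 1 := by
        have h' : ((Zf κ x : ℕ) : ℝ) + 1 ≤ ((Zc x : ℕ) : ℝ) := by exact_mod_cast hcard
        linarith
      have hdiv : (Zf κ x : ℝ) / (1 - p) ≤ ((Zc x : ℝ) - 1) / (1 - p) :=
        (div_le_div_iff_of_pos_right hq0).mpr hle
      linarith
    calc ∑ x ∈ univ.filter (fun x : Fin n → Bool => P.code x = κ), wt p x * G p x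
        ≤ ∑ x ∈ univ.filter (fun x : Fin n → Bool => P.code x = κ),
            wt p x * ((n : ℝ) - (Zf κ x : ℝ) / (1 - p)) := Finset.sum_le_sum hpoint
      _ = (d : ℝ) * muF p κ := by
          have hexp : ∀ x ∈ univ.filter (fun x : Fin n → Bool => P.code x = κ),
              wt p x * ((n : ℝ) - (Zf κ x : ℝ) / (1 - p))
                = wt p x * (n : ℝ) - (wt p x * (Zf κ x : ℝ)) / (1 - p) := by
            intro x _
            ring
          rw [Finset.sum_congr rfl hexp, Finset.sum_sub_distrib, ← Finset.sum_mul,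
            ← Finset.sum_div, hfs, Finset.sum_filter, sum_cube, Finset.sum_filter, sum_cube_zf]
          rw [mul_comm ((1 : ℝ) - p) (nfree κ : ℝ) , mul_assoc, mul_comm,
            mul_div_assoc]
          rw [mul_comm ((1 : ℝ) - p) (muF p κ), mul_div_assoc, div_self (ne_of_gt hq0), mul_one]
          have : (n : ℝ) = (d : ℝ) + (nfree κ : ℝ) := by exact_mod_cast hdm.symm
          rw [this]
          ring
  · push_neg at hz
    have htrue : ∀ i b, κ i = some b → b = true := by
      intro i b hb
      cases b
      · exact absurd hb (hz i)
      · rfl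
    have h1 : InCube κ (fun _ => true) := fun i b hb => (htrue i b hb).symm
    have hxall : ∀ x : Fin n → Bool, P.code x = κ → ∀ i, x i = true := by
      intro x hx
      have hagree : ∀ i b, P.code x i = some b → (fun _ : Fin n => true) i = b := by
        intro i b hb
        exact h1 i b (by rw [← hx]; exact hb)
      have := hdet x (fun _ => true) hagree
      have hft : f (fun _ : Fin n => true) = true := (hf _).mpr (fun _ => rfl)
      rw [hft] at this
      exact (hf x).mp this.symm
    have hdall : d = n := by
      by_contra hdn
      have : ∃ i, κ i = none := by
        by_contra hc
        push_neg at hc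
        apply hdn
        rw [hd]
        have : univ.filter (fun i : Fin n => (κ i).isSome) = univ := by
          apply Finset.filter_true_of_mem
          intro i _
          rw [Option.isSome_iff_ne_none]
          exact hc i
        rw [this, Finset.card_univ, Fintype.card_fin]
      obtain ⟨i, hi⟩ := this
      set y : Fin n → Bool := fun j => if j = i then false else true with hy
      have hagree : ∀ j b, P.code x₀ j = some b → y j = b := by
        intro j b hb
        have hj : κ j = some b := hb
        have hbt : b = true := htrue j b hj
        have hji : j ≠ i := by
          intro h
          rw [h, hi] at hj
          cases hj
        rw [hy, hbt]
        simp [hji]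
      have := hdet x₀ y hagree
      have hfx₀ : f x₀ = true := (hf x₀).mpr (hxall x₀ hκ.symm)
      rw [hfx₀] at this
      have := (hf y).mp this
      have := this i
      simp [hy] at this
    apply le_of_eq
    have hterm : ∀ x ∈ univ.filter (fun x : Fin n → Bool => P.code x = κ),
        wt p x * G p x = (d : ℝ) * wt p x := by
      intro x hx
      have hx' : P.code x = κ := (mem_filter.mp hx).2
      have hall := hxall x hx'
      have hG : G p x = (n : ℝ) := by unfold G; rw [if_pos hall]
      rw [hG, hdall]
      ring
    rw [Finset.sum_congr rfl hterm, ← Finset.mul_sum, hfs, Finset.sum_filter, sum_cube]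

lemma expec_codim_ge {p : ℝ} (hp0 : 0 ≤ p) (hp1 : p < 1) {f : (Fin n → Bool) → Bool}
    (hf : ∀ x, f x = true ↔ ∀ i, x i = true)
    (P : SubcubePartition (Fin n)) (hdet : P.Determines f) :
    (1 - p ^ n) / (1 - p) ≤ expec p (fun x => (P.codim x : ℝ)) := by
  classical
  have hq : (1 : ℝ) - p ≠ 0 := by intro h; rw [sub_eq_zero] at h; exact (ne_of_lt hp1) h.symm
  rw [expec, ← sum_wt_G (n := n) hq]
  rw [← Finset.sum_fiberwise_of_maps_to
    (g := P.code) (t := univ.image P.code)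
    (fun x _ => Finset.mem_image_of_mem P.code (mem_univ x)) (fun x => wt p x * G p x)]
  rw [← Finset.sum_fiberwise_of_maps_to
    (g := P.code) (t := univ.image P.code)
    (fun x _ => Finset.mem_image_of_mem P.code (mem_univ x))
    (fun x => wt p x * (P.codim x : ℝ))]
  apply Finset.sum_le_sum
  intro κ hκ
  obtain ⟨x₀, _, rfl⟩ := Finset.mem_image.mp hκ
  exact part_le hp0 hp1 hf P hdet x₀

/-- The sequential subcube partition code. -/
def seqCode (x : Fin n → Bool) : Fin n → Option Bool :=
  fun i => if ∀ j, j < i → x j = true then some (x i) else none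

lemma exists_min_false (x : Fin n → Bool) (h : ¬ ∀ i, x i = true) :
    ∃ k, x k = false ∧ ∀ j, j < k → x j = true := by
  classical
  push_neg at h
  obtain ⟨i, hi⟩ := h
  have hine : (univ.filter fun j : Fin n => x j = false).Nonempty :=
    ⟨i, by simp [Bool.not_eq_true] at hi; simp [hi]⟩
  refine ⟨(univ.filter fun j : Fin n => x j = false).min' hine, ?_, ?_⟩
  · have := Finset.min'_mem _ hine
    exact (mem_filter.mp this).2
  · intro j hj
    by_contra hc
    have hjf : x j = false := by
      cases hxj : x j
      · rfl
      · exact absurd hxj hc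
    have hmem : j ∈ univ.filter fun j : Fin n => x j = false := by simp [hjf]
    exact absurd (Finset.min'_le _ j hmem) (not_le.mpr hj)

lemma seq_agree {x y : Fin n → Bool}
    (h : ∀ i b, seqCode x i = some b → y i = b) :
    ∀ i, (∀ j, j < i → x j = true) → y i = x i := by
  intro i hi
  exact h i (x i) (by rw [seqCode]; simp only [if_pos hi])

lemma seq_prefix {x y : Fin n → Bool}
    (h : ∀ i, (∀ j, j < i → x j = true) → y i = x i) (i : Fin n) :
    (∀ j, j < i → x j = true) ↔ (∀ j, j < i → y j = true) := by
  constructor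
  · intro hx j hj
    rw [h j (fun j' hj' => hx j' (hj'.trans hj))]
    exact hx j hj
  · intro hy
    by_contra hx
    obtain ⟨k, hkf, hkmin⟩ := exists_min_false x (fun hall => hx (fun j _ => hall j))
    rcases lt_or_ge k i with hki | hik
    · have hyx := h k hkmin
      rw [hy k hki, hkf] at hyx
      cases hyx
    · exact hx fun j hj => hkmin j (lt_of_lt_of_le hj hik)

/-- The sequential subcube partition. -/
def seqPart (n : ℕ) : SubcubePartition (Fin n) where
  code := seqCode
  self_mem := by
    intro x i b hb
    rw [seqCode] at hb
    split at hb
    · exact (Option.some.inj hb).symm ▸ rfl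
    · cases hb
  compat := by
    intro x y hagree
    have h := seq_agree hagree
    funext i
    by_cases hc : ∀ j, j < i → x j = true
    · rw [seqCode, seqCode]
      simp only [if_pos hc, if_pos ((seq_prefix h i).mp hc), h i hc]
    · rw [seqCode, seqCode]
      simp only [if_neg hc, if_neg (fun hy => hc ((seq_prefix h i).mpr hy))]

lemma seqPart_det {f : (Fin n → Bool) → Bool}
    (hf : ∀ x, f x = true ↔ ∀ i, x i = true) : (seqPart n).Determines f := by
  intro x y hagree
  have h := seq_agree (x := x) (y := y) hagree
  by_cases hall : ∀ i, x i = true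
  · have : y = x := funext fun i => h i (fun j _ => hall j)
    rw [this]
  · obtain ⟨k, hkf, hkmin⟩ := exists_min_false x hall
    have hyk : y k = x k := h k hkmin
    have hfx : f x = false := by
      cases hx : f x
      · rfl
      · exact absurd (fun i => (hf x).mp hx i) hall
    have hfy : f y = false := by
      cases hy : f y
      · rfl
      · have := (hf y).mp hy k
        rw [hyk, hkf] at this
        cases this
    rw [hfx, hfy]

lemma seq_codim (x : Fin n → Bool) :
    (seqPart n).codim x = (univ.filter fun i : Fin n => ∀ j, j < i → x j = true).card := by
  unfold SubcubePartition.codim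
  congr 1
  ext i
  by_cases hc : ∀ j, j < i → x j = true <;>
    simp [seqPart, seqCode, hc]

lemma seq_expec {p : ℝ} (hp1 : p ≠ 1) :
    expec p (fun x : Fin n → Bool => ((seqPart n).codim x : ℝ)) = (1 - p ^ n) / (1 - p) := by
  classical
  rw [expec]
  have hterm : ∀ x : Fin n → Bool, wt p x * ((seqPart n).codim x : ℝ)
      = ∑ i : Fin n,
          (if InCube (fun j => if j < i then some true else none) x then wt p x else 0) := by
    intro x
    rw [seq_codim, Finset.card_filter]
    push_cast
    rw [Finset.mul_sum]
    refine Finset.sum_congr rfl fun i _ => ?_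
    have hic : InCube (fun j : Fin n => if j < i then some true else none) x
        ↔ ∀ j, j < i → x j = true := by
      constructor
      · intro h j hj
        exact h j true (by simp [hj])
      · intro h j b hb
        simp only at hb
        by_cases hj : j < i
        · rw [if_pos hj] at hb
          rw [h j hj, ← Option.some.inj hb]
        · rw [if_neg hj] at hb
          cases hb
    by_cases h : ∀ j, j < i → x j = true
    · rw [if_pos h, if_pos (hic.mpr h), mul_one]
    · rw [if_neg h, if_neg (fun hc => h (hic.mp hc)), mul_zero]
  rw [Finset.sum_congr rfl fun x _ => hterm x, Finset.sum_comm]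
  have hmu : ∀ i : Fin n,
      (∑ x : Fin n → Bool,
        (if InCube (fun j => if j < i then some true else none) x then wt p x else 0))
      = p ^ (i : ℕ) := by
    intro i
    rw [sum_cube]
    unfold muF
    have hfac : ∀ j : Fin n,
        ((if j < i then some true else none) : Option Bool).elim 1
          (fun b => if b then p else 1 - p)
        = if j < i then p else 1 := by
      intro j
      by_cases hj : j < i <;> simp [hj]
    rw [Finset.prod_congr rfl fun j _ => hfac j]
    rw [Finset.prod_ite, Finset.prod_const, Finset.prod_const_one, mul_one]
    congr 1
    have : univ.filter (fun j : Fin n => j < i) = Finset.Iio i := by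
      ext j
      simp [Finset.mem_Iio]
    rw [this, Fin.card_Iio]
  rw [Finset.sum_congr rfl fun i _ => hmu i]
  rw [Fin.sum_univ_eq_sum_range (fun k => p ^ k) n, geom_sum_eq hp1]
  rw [← neg_div_neg_eq, neg_sub, neg_sub]

end AndSCAux

/-- for the AND function on `n` bits and `p ≤ 1/2`, the distributional
subcube partition complexity equals the distributional algorithmic complexity:
`sc(AND_n, π_p) = (1 - p^n)/(1 - p)`. -/
theorem and_distSC (n : ℕ) (hn : 1 ≤ n) (f : (Fin n → Bool) → Bool)
    (hf : ∀ x, f x = true ↔ ∀ i, x i = true) (p : ℝ) (hp0 : 0 ≤ p) (hp2 : p ≤ 1 / 2) :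
    distSC f p = (1 - p ^ n) / (1 - p) := by
  classical
  have hp1 : p < 1 := lt_of_le_of_lt hp2 (by norm_num)
  rw [distSC]
  have hmem : (1 - p ^ n) / (1 - p) ∈
      {c | ∃ P : SubcubePartition (Fin n), P.Determines f ∧
        c = expec p fun x => (P.codim x : ℝ)} :=
    ⟨AndSCAux.seqPart n, AndSCAux.seqPart_det hf, (AndSCAux.seq_expec (ne_of_lt hp1)).symm⟩
  have hlb : ∀ c ∈ {c | ∃ P : SubcubePartition (Fin n), P.Determines f ∧
        c = expec p fun x => (P.codim x : ℝ)}, (1 - p ^ n) / (1 - p) ≤ c := by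
    rintro c ⟨P, hdet, rfl⟩
    exact AndSCAux.expec_codim_ge hp0 hp1 hf P hdet
  exact le_antisymm (csInf_le ⟨_, hlb⟩ hmem) (le_csInf ⟨_, hmem⟩ hlb)
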